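/- arXiv:2501.02601 — 2 statements merged into one kernel-verified Lean document; each statement's English description precedes it below -/
import Mathlib

section
/- Let K = {h ∈ ℝ^p : Σ_{j∈S^c} |h_j| ≤ −sᵀh} where s ∈ {−1,0,1}^p has support S of size k. Suppose the restricted eigenvalue condition Δ*‖v‖ ≤ ‖Xv‖/√n holds for all v ∈ K, and that ‖Xs‖ ≤ c₁√(nk), √n ≤ c₂√k, ‖ε‖ ≤ c₃√n. Let b* have sign pattern s, y = Xb* + ε, and let b̂ be a Lasso minimizer of (1/2)‖Xb − y‖² + λ√n‖b‖₁ with h = b̂ − b*. Then ‖Xh‖/√n ≤ Δ*^{-1}(λ√(k/n) + c₁c₂c₃). -/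
open Matrix BigOperators

noncomputable def vnorm {m : ℕ} (v : Fin m → ℝ) : ℝ := Real.sqrt (∑ i, v i ^ 2)

noncomputable def vnorm1 {m : ℕ} (v : Fin m → ℝ) : ℝ := ∑ i, |v i|

lemma vnorm_nonneg {m : ℕ} (v : Fin m → ℝ) : 0 ≤ vnorm v := Real.sqrt_nonneg _

lemma vnorm_sq {m : ℕ} (v : Fin m → ℝ) : vnorm v ^ 2 = ∑ i, v i ^ 2 :=
  Real.sq_sqrt (Finset.sum_nonneg fun i _ => sq_nonneg _)

lemma vnorm_eq_zero {m : ℕ} {v : Fin m → ℝ} (h : vnorm v = 0) : v = 0 := by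
  have h2 : ∑ i, v i ^ 2 = 0 :=
    le_antisymm (Real.sqrt_eq_zero'.mp h) (Finset.sum_nonneg fun i _ => sq_nonneg _)
  funext i
  have := (Finset.sum_eq_zero_iff_of_nonneg (fun i _ => sq_nonneg (v i))).mp h2 i
    (Finset.mem_univ i)
  exact pow_eq_zero_iff (by norm_num) |>.mp this

lemma vnorm_neg {m : ℕ} (v : Fin m → ℝ) : vnorm (-v) = vnorm v := by
  unfold vnorm
  congr 1
  exact Finset.sum_congr rfl fun i _ => by simp [neg_sq]

lemma vnorm_dot_le {m : ℕ} (u v : Fin m → ℝ) : ∑ i, u i * v i ≤ vnorm u * vnorm v := by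
  have hcs := Finset.sum_mul_sq_le_sq_mul_sq Finset.univ u v
  have h1 : vnorm u * vnorm v = Real.sqrt ((∑ i, u i ^ 2) * (∑ i, v i ^ 2)) :=
    (Real.sqrt_mul (Finset.sum_nonneg fun i _ => sq_nonneg _) _).symm
  rw [h1]
  rcases le_or_gt (∑ i, u i * v i) 0 with h | h
  · exact h.trans (Real.sqrt_nonneg _)
  · rw [show (∑ i, u i * v i) = Real.sqrt ((∑ i, u i * v i) ^ 2) by
      rw [Real.sqrt_sq h.le]]
    exact Real.sqrt_le_sqrt hcs

set_option maxHeartbeats 1000000 in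
/-- inequality (pre-risk) of Proposition 3.1: the restricted
eigenvalue condition on the cone `K` implies the prediction-error bound
`‖Xh‖/√n ≤ Δ*⁻¹(λ√(k/n) + c₁c₂c₃)`. -/
theorem stmt_6 {n p : ℕ} (hn : 0 < n)
    (X : Matrix (Fin n) (Fin p) ℝ) (ε : Fin n → ℝ) (y : Fin n → ℝ)
    (lam Δ c₁ c₂ c₃ : ℝ) (hlam : 0 < lam) (hΔ : 0 < Δ)
    (hc₁ : 0 < c₁) (hc₂ : 0 < c₂) (hc₃ : 0 < c₃)
    (s : Fin p → ℝ) (hs : ∀ j, s j = -1 ∨ s j = 0 ∨ s j = 1)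
    (S : Finset (Fin p)) (hS : S = Finset.univ.filter (fun j => s j ≠ 0))
    (k : ℕ) (hk : k = S.card) (hk1 : 1 ≤ k)
    (K : Set (Fin p → ℝ))
    (hK : K = {h : Fin p → ℝ | ∑ j ∈ Sᶜ, |h j| ≤ -(s ⬝ᵥ h)})
    (hRE : ∀ v ∈ K, Δ * vnorm v ≤ vnorm (X.mulVec v) / Real.sqrt n)
    (hXs : vnorm (X.mulVec s) ≤ c₁ * Real.sqrt ((n : ℝ) * k))
    (hnk : Real.sqrt n ≤ c₂ * Real.sqrt k)
    (hε : vnorm ε ≤ c₃ * Real.sqrt n)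
    (bstar : Fin p → ℝ) (hsign : ∀ j, bstar j ≠ 0 → Real.sign (bstar j) = s j)
    (hy : y = X.mulVec bstar + ε)
    (bhat : Fin p → ℝ)
    (hbhat : ∀ b : Fin p → ℝ,
      (1/2) * (vnorm (X.mulVec bhat - y))^2 + lam * Real.sqrt n * vnorm1 bhat ≤
      (1/2) * (vnorm (X.mulVec b - y))^2 + lam * Real.sqrt n * vnorm1 b) :
    vnorm (X.mulVec (bhat - bstar)) / Real.sqrt n ≤
      Δ⁻¹ * (lam * Real.sqrt ((k : ℝ) / n) + c₁ * c₂ * c₃) := by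
  -- basic positivity facts
  have hsn : (0:ℝ) < Real.sqrt n := Real.sqrt_pos.mpr (by exact_mod_cast hn)
  have hkpos : (0:ℝ) < k := by exact_mod_cast hk1
  have hsk : (0:ℝ) < Real.sqrt k := Real.sqrt_pos.mpr hkpos
  -- s vanishes off S
  have hs0 : ∀ j, j ∉ S → s j = 0 := by
    intro j hj
    by_contra hne
    exact hj (by rw [hS]; simp [hne])
  -- sum of squares of s is k
  have hss : ∑ j, s j ^ 2 = (k:ℝ) := by
    have e : ∀ j, s j ^ 2 = if j ∈ S then (1:ℝ) else 0 := by
      intro j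
      by_cases hj : j ∈ S
      · rcases hs j with h | h | h
        · simp [hj, h]
        · exfalso; rw [hS] at hj; simp [h] at hj
        · simp [hj, h]
      · simp [hj, hs0 j hj]
    rw [Finset.sum_congr rfl fun j _ => e j]
    simp [hk]
  have hvs : vnorm s = Real.sqrt k := by rw [vnorm, hss]
  -- Δ ≤ c₁ from -s ∈ K
  have hsmem : (-s) ∈ K := by
    rw [hK]
    simp only [Set.mem_setOf_eq]
    have l : ∑ j ∈ Sᶜ, |(-s) j| = 0 :=
      Finset.sum_eq_zero fun j hj => by
        rw [Pi.neg_apply, hs0 j (Finset.mem_compl.mp hj)]; simp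
    have r : -(s ⬝ᵥ (-s)) = (k:ℝ) := by
      rw [dotProduct_neg, neg_neg, dotProduct]
      rw [Finset.sum_congr rfl fun j _ => (sq (s j)).symm]
      exact hss
    rw [l, r]
    exact hkpos.le
  have hΔc₁ : Δ ≤ c₁ := by
    have h1 := hRE (-s) hsmem
    rw [vnorm_neg, hvs, Matrix.mulVec_neg, vnorm_neg] at h1
    have h2 : vnorm (X.mulVec s) / Real.sqrt n ≤ c₁ * Real.sqrt k := by
      rw [div_le_iff₀ hsn]
      calc vnorm (X.mulVec s) ≤ c₁ * Real.sqrt ((n:ℝ) * k) := hXs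
        _ = c₁ * Real.sqrt k * Real.sqrt n := by
            rw [Real.sqrt_mul (by positivity)]; ring
    have := h1.trans h2
    exact le_of_mul_le_mul_right this hsk
  -- k ≤ n : X is injective on vectors supported on S
  have hkn : k ≤ n := by
    set F : ({j // j ∈ S} → ℝ) →ₗ[ℝ] (Fin n → ℝ) :=
      X.mulVecLin.comp (Function.ExtendByZero.linearMap ℝ (Subtype.val : {j // j ∈ S} → Fin p))
      with hF
    have hFinj : Function.Injective F := by
      rw [← LinearMap.ker_eq_bot, LinearMap.ker_eq_bot']
      intro c hc
      set z : Fin p → ℝ := Function.extend Subtype.val c 0 with hzdef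
      have hz0 : ∀ j, j ∉ S → z j = 0 := by
        intro j hj
        rw [hzdef, Function.extend_apply' c (0 : Fin p → ℝ) j]
        · rfl
        · rintro ⟨⟨i, hi⟩, rfl⟩; exact hj hi
      have hXz : X.mulVec z = 0 := hc
      have hzsum : ∑ j ∈ Sᶜ, |z j| = 0 :=
        Finset.sum_eq_zero fun j hj => by rw [hz0 j (Finset.mem_compl.mp hj), abs_zero]
      have hzero : z = 0 := by
        rcases le_or_gt (s ⬝ᵥ z) 0 with hd | hd
        · have hmem : z ∈ K := by
            rw [hK]; simp only [Set.mem_setOf_eq]; rw [hzsum]; linarith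
          have := hRE z hmem
          rw [hXz] at this
          have h0 : vnorm (0 : Fin n → ℝ) = 0 := by
            simp [vnorm]
          rw [h0, zero_div] at this
          have : vnorm z = 0 :=
            le_antisymm (by nlinarith [vnorm_nonneg z]) (vnorm_nonneg z)
          exact vnorm_eq_zero this
        · have hmem : (-z) ∈ K := by
            rw [hK]; simp only [Set.mem_setOf_eq]
            have l : ∑ j ∈ Sᶜ, |(-z) j| = 0 :=
              Finset.sum_eq_zero fun j hj => by
                rw [Pi.neg_apply, hz0 j (Finset.mem_compl.mp hj)]; simp
            rw [l, dotProduct_neg, neg_neg]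
            exact hd.le
          have := hRE (-z) hmem
          rw [Matrix.mulVec_neg, hXz, neg_zero] at this
          have h0 : vnorm (0 : Fin n → ℝ) = 0 := by simp [vnorm]
          rw [h0, zero_div, vnorm_neg] at this
          have : vnorm z = 0 :=
            le_antisymm (by nlinarith [vnorm_nonneg z]) (vnorm_nonneg z)
          exact vnorm_eq_zero this
      funext i
      have : z i.val = c i := by
        rw [hzdef, Subtype.val_injective.extend_apply]
      rw [← this, hzero]; rfl
    have hle := LinearMap.finrank_le_finrank_of_injective hFinj
    rw [Module.finrank_fintype_fun_eq_card, Module.finrank_fintype_fun_eq_card,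
      Fintype.card_coe, Fintype.card_fin] at hle
    omega
  have hc21 : 1 ≤ c₂ := by
    have h1 : Real.sqrt k ≤ Real.sqrt n := Real.sqrt_le_sqrt (by exact_mod_cast hkn)
    have h2 : 1 * Real.sqrt k ≤ c₂ * Real.sqrt k := by rw [one_mul]; exact h1.trans hnk
    exact le_of_mul_le_mul_right h2 hsk
  -- abbreviations
  set a : Fin n → ℝ := X.mulVec (bhat - bstar) with ha
  set T := vnorm a with hT
  set E := vnorm ε with hE
  set P := ∑ i, a i * ε i with hP
  set Ns := vnorm1 bstar with hNs
  set Nh := vnorm1 bhat with hNh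
  have hE0 : 0 ≤ E := vnorm_nonneg ε
  have hT0 : 0 ≤ T := vnorm_nonneg a
  -- quadratic expansion
  have expand : ∀ t : ℝ, vnorm (fun i => t * a i - ε i) ^ 2 = t^2*T^2 - 2*t*P + E^2 := by
    intro t
    have h1 : T^2 = ∑ i, a i ^ 2 := vnorm_sq _
    have h2 : E^2 = ∑ i, ε i ^ 2 := vnorm_sq _
    rw [vnorm_sq, h1, h2, hP, Finset.mul_sum, Finset.mul_sum,
      ← Finset.sum_sub_distrib, ← Finset.sum_add_distrib]
    exact Finset.sum_congr rfl fun i _ => by ring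
  have e1 : X.mulVec bhat - y = fun i => 1 * a i - ε i := by
    funext i
    rw [ha, hy]
    simp only [Matrix.mulVec_sub, Pi.sub_apply, Pi.add_apply]
    ring
  have e2 : ∀ t : ℝ, X.mulVec (bstar + t • (bhat - bstar)) - y = fun i => t * a i - ε i := by
    intro t
    funext i
    rw [ha, hy, Matrix.mulVec_add, Matrix.mulVec_smul]
    simp only [Matrix.mulVec_sub, Pi.sub_apply, Pi.add_apply, Pi.smul_apply, smul_eq_mul]
    ring
  -- the family of inequalities from optimality of bhat
  have fam : ∀ τ : ℝ, 0 ≤ τ → τ < 1 →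
      (1+τ)/2 * T^2 ≤ P + lam * Real.sqrt n * (Ns - Nh) := by
    intro τ h0 h1'
    have hb := hbhat (bstar + τ • (bhat - bstar))
    have q1 : vnorm (X.mulVec bhat - y) ^ 2 = T^2 - 2*P + E^2 := by
      rw [e1, expand 1]; ring
    have q2 : vnorm (X.mulVec (bstar + τ • (bhat - bstar)) - y) ^ 2
        = τ^2*T^2 - 2*τ*P + E^2 := by
      rw [e2 τ, expand τ]
    have q3 : vnorm1 (bstar + τ • (bhat - bstar)) ≤ (1-τ)*Ns + τ*Nh := by
      rw [hNs, hNh]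
      unfold vnorm1
      rw [Finset.mul_sum, Finset.mul_sum, ← Finset.sum_add_distrib]
      apply Finset.sum_le_sum
      intro j _
      have hval : (bstar + τ • (bhat - bstar)) j = (1-τ)*bstar j + τ*bhat j := by
        simp [smul_eq_mul]; ring
      rw [hval]
      calc |(1-τ)*bstar j + τ*bhat j| ≤ |(1-τ)*bstar j| + |τ*bhat j| := abs_add_le _ _
        _ = (1-τ)*|bstar j| + τ*|bhat j| := by
            rw [abs_mul, abs_mul, abs_of_nonneg (by linarith : (0:ℝ) ≤ 1-τ),
              abs_of_nonneg h0]
    rw [q1, q2] at hb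
    have hlamsn : (0:ℝ) < lam * Real.sqrt n := by positivity
    have hb2 : 1/2*(T^2-2*P+E^2) + lam*Real.sqrt n*Nh ≤
        1/2*(τ^2*T^2-2*τ*P+E^2) + lam*Real.sqrt n*((1-τ)*Ns + τ*Nh) := by
      have := mul_le_mul_of_nonneg_left q3 hlamsn.le
      linarith [hb]
    have h1τ : (0:ℝ) < 1 - τ := by linarith
    have hid : (1-τ) * ((1+τ)/2*T^2 - (P + lam*Real.sqrt n*(Ns-Nh))) =
        (1/2*(T^2-2*P+E^2) + lam*Real.sqrt n*Nh) -
        (1/2*(τ^2*T^2-2*τ*P+E^2) + lam*Real.sqrt n*((1-τ)*Ns + τ*Nh)) := by ring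
    have key : (1-τ) * ((1+τ)/2*T^2 - (P + lam*Real.sqrt n*(Ns-Nh))) ≤ (1-τ) * 0 := by
      rw [mul_zero, hid]; linarith
    have := le_of_mul_le_mul_left key h1τ
    linarith
  -- letting τ → 1
  have key5a : T^2 ≤ P + lam * Real.sqrt n * (Ns - Nh) := by
    by_contra hcon
    push_neg at hcon
    have hT2 : 0 < T^2 := by
      have := fam 0 le_rfl one_pos
      linarith
    set A := T^2 - (P + lam * Real.sqrt n * (Ns - Nh)) with hA
    have hApos : 0 < A := by rw [hA]; linarith
    set δ := min 1 (A/T^2) with hδ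
    have hδpos : 0 < δ := lt_min one_pos (div_pos hApos hT2)
    have hδ1 : δ ≤ 1 := min_le_left _ _
    have hfam := fam (1-δ) (by linarith) (by linarith)
    have h2 : δ ≤ A/T^2 := min_le_right _ _
    have h3 : δ * T^2 ≤ A := (le_div_iff₀ hT2).mp h2
    linarith [hfam, h3, hApos]
  -- sign inequality for the l1 norms
  have key4 : Ns - Nh ≤ -(s ⬝ᵥ (bhat - bstar)) - ∑ j ∈ Sᶜ, |(bhat - bstar) j| := by
    have pw : ∀ j, |bstar j| - |bhat j| + (if j ∈ Sᶜ then |(bhat - bstar) j| else 0) ≤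
        -(s j * ((bhat - bstar) j)) := by
      intro j
      by_cases hj : j ∈ S
      · have hjc : j ∉ Sᶜ := by simp [hj]
        rw [if_neg hjc]
        have habs : |s j| = 1 := by
          rcases hs j with h | h | h
          · simp [h]
          · exfalso; rw [hS] at hj; simp [h] at hj
          · simp [h]
        have h1 : |bstar j| = s j * bstar j := by
          by_cases hb : bstar j = 0
          · simp [hb]
          · rw [← hsign j hb]
            rcases lt_or_gt_of_ne hb with h' | h'
            · rw [Real.sign_of_neg h', abs_of_neg h']; ring
            · rw [Real.sign_of_pos h', abs_of_pos h']; ring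
        have h2 : s j * bhat j ≤ |bhat j| := by
          calc s j * bhat j ≤ |s j * bhat j| := le_abs_self _
            _ = |s j| * |bhat j| := abs_mul _ _
            _ = |bhat j| := by rw [habs, one_mul]
        have h3 : (bhat - bstar) j = bhat j - bstar j := rfl
        rw [h3]
        nlinarith [h1, h2]
      · have hjc : j ∈ Sᶜ := Finset.mem_compl.mpr hj
        rw [if_pos hjc]
        have hsj : s j = 0 := hs0 j hj
        have hbj : bstar j = 0 := by
          by_contra hb
          have := hsign j hb
          rw [hsj] at this
          exact hb (Real.sign_eq_zero_iff.mp this)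
        have h3 : (bhat - bstar) j = bhat j - bstar j := rfl
        rw [h3, hbj, hsj]
        simp
    have hsum := Finset.sum_le_sum (fun j (_ : j ∈ Finset.univ) => pw j)
    have hsplit : ∑ j, (if j ∈ Sᶜ then |(bhat - bstar) j| else 0) =
        ∑ j ∈ Sᶜ, |(bhat - bstar) j| := by
      rw [Finset.sum_ite_mem, Finset.univ_inter]
    have hdot : ∑ j, -(s j * ((bhat - bstar) j)) = -(s ⬝ᵥ (bhat - bstar)) := by
      rw [dotProduct, ← Finset.sum_neg_distrib]
    rw [Finset.sum_add_distrib, Finset.sum_sub_distrib, hsplit, hdot] at hsum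
    rw [hNs, hNh]
    unfold vnorm1
    linarith [hsum]
  -- the basic inequality
  have hlamsn : (0:ℝ) < lam * Real.sqrt n := by positivity
  have key5 : T^2 ≤ E*T + lam * Real.sqrt n *
      (-(s ⬝ᵥ (bhat - bstar)) - ∑ j ∈ Sᶜ, |(bhat - bstar) j|) := by
    have hPle : P ≤ T*E := vnorm_dot_le a ε
    have := mul_le_mul_of_nonneg_left key4 hlamsn.le
    nlinarith [key5a]
  -- the prediction error bound before dividing by sqrt n
  have key6 : T ≤ Δ⁻¹*(lam*Real.sqrt k) + E := by
    rcases le_or_gt T E with hTE | hTE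
    · have : (0:ℝ) ≤ Δ⁻¹*(lam*Real.sqrt k) := by positivity
      linarith
    · have hTpos : 0 < T := lt_of_le_of_lt hE0 hTE
      have hKmem : (bhat - bstar) ∈ K := by
        rw [hK]
        simp only [Set.mem_setOf_eq]
        by_contra hcon
        push_neg at hcon
        have hneg : -(s ⬝ᵥ (bhat - bstar)) - ∑ j ∈ Sᶜ, |(bhat - bstar) j| < 0 := by
          linarith
        have hneg2 : lam * Real.sqrt n *
            (-(s ⬝ᵥ (bhat - bstar)) - ∑ j ∈ Sᶜ, |(bhat - bstar) j|) < 0 :=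
          mul_neg_of_pos_of_neg hlamsn hneg
        nlinarith [key5, mul_pos (sub_pos.mpr hTE) hTpos]
      have hREh := hRE _ hKmem
      rw [← ha, ← hT] at hREh
      have hCS : -(s ⬝ᵥ (bhat - bstar)) ≤ Real.sqrt k * vnorm (bhat - bstar) := by
        have hd := vnorm_dot_le (-s) (bhat - bstar)
        rw [vnorm_neg, hvs] at hd
        calc -(s ⬝ᵥ (bhat - bstar)) = ∑ i, (-s) i * (bhat - bstar) i := by
              rw [dotProduct, ← Finset.sum_neg_distrib]
              exact Finset.sum_congr rfl fun i _ => by simp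
          _ ≤ _ := hd
      have hSsum : 0 ≤ ∑ j ∈ Sᶜ, |(bhat - bstar) j| :=
        Finset.sum_nonneg fun j _ => abs_nonneg _
      have hvh : vnorm (bhat - bstar) ≤ T/(Δ*Real.sqrt n) := by
        rw [le_div_iff₀ (by positivity)]
        calc vnorm (bhat - bstar) * (Δ*Real.sqrt n)
            = (Δ * vnorm (bhat - bstar)) * Real.sqrt n := by ring
          _ ≤ (T/Real.sqrt n)*Real.sqrt n := mul_le_mul_of_nonneg_right hREh hsn.le
          _ = T := div_mul_cancel₀ _ hsn.ne'
      have h2 : -(s ⬝ᵥ (bhat - bstar)) - ∑ j ∈ Sᶜ, |(bhat - bstar) j| ≤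
          Real.sqrt k * (T/(Δ*Real.sqrt n)) := by
        have := mul_le_mul_of_nonneg_left hvh hsk.le
        linarith [hCS, hSsum]
      have h4 := mul_le_mul_of_nonneg_left h2 hlamsn.le
      have hsimp : lam*Real.sqrt n*(Real.sqrt k * (T/(Δ*Real.sqrt n))) =
          Δ⁻¹*(lam*Real.sqrt k)*T := by
        field_simp
      rw [hsimp] at h4
      have h5 : T * T ≤ (Δ⁻¹*(lam*Real.sqrt k) + E) * T := by nlinarith [key5, h4]
      exact le_of_mul_le_mul_right h5 hTpos
  -- conclusion
  have hdiv : T / Real.sqrt n ≤ (Δ⁻¹*(lam*Real.sqrt k) + E)/Real.sqrt n :=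
    (div_le_div_iff_of_pos_right hsn).mpr key6
  have hskn : Real.sqrt ((k:ℝ)/n) = Real.sqrt k / Real.sqrt n :=
    Real.sqrt_div' _ (Nat.cast_nonneg n)
  have hEn : E / Real.sqrt n ≤ c₃ := by
    rw [div_le_iff₀ hsn]; exact hε
  have hone : (1:ℝ) ≤ Δ⁻¹*c₁ := by
    rw [show Δ⁻¹*c₁ = c₁/Δ by ring]
    exact (one_le_div hΔ).mpr hΔc₁
  have hc3' : c₃ ≤ Δ⁻¹*(c₁*c₂*c₃) := by
    calc c₃ ≤ c₂*c₃ := by nlinarith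
      _ = 1*(c₂*c₃) := (one_mul _).symm
      _ ≤ (Δ⁻¹*c₁)*(c₂*c₃) := mul_le_mul_of_nonneg_right hone (by positivity)
      _ = Δ⁻¹*(c₁*c₂*c₃) := by ring
  rw [hskn]
  calc T/Real.sqrt n ≤ (Δ⁻¹*(lam*Real.sqrt k) + E)/Real.sqrt n := hdiv
    _ = Δ⁻¹*(lam*(Real.sqrt k/Real.sqrt n)) + E/Real.sqrt n := by ring
    _ ≤ Δ⁻¹*(lam*(Real.sqrt k/Real.sqrt n)) + Δ⁻¹*(c₁*c₂*c₃) := by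
        linarith [hEn.trans hc3']
    _ = Δ⁻¹*(lam*(Real.sqrt k/Real.sqrt n) + c₁*c₂*c₃) := by ring
end

section
/- Under the assumptions of the previous proposition (restricted eigenvalue condition Δ*‖v‖ ≤ ‖Xv‖/√n on K, deterministic bounds ‖Xs‖ ≤ c₁√(nk), √n ≤ c₂√k, ‖ε‖ ≤ c₃√n), the Lasso error h = b̂ − b* satisfies ‖h‖ ≤ (‖Xh‖/√n)·[c₂c₃/λ + Δ*^{-1}(1 + c₁c₂c₃/λ)]. -/
open Matrix BigOperators

lemma sq_vnorm {m : ℕ} (v : Fin m → ℝ) : (vnorm v)^2 = ∑ i, v i ^ 2 :=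
  Real.sq_sqrt (Finset.sum_nonneg fun _ _ => sq_nonneg _)

lemma dot_le_vnorm_mul {m : ℕ} (a b : Fin m → ℝ) : a ⬝ᵥ b ≤ vnorm a * vnorm b := by
  have h := Finset.sum_mul_sq_le_sq_mul_sq Finset.univ a b
  have h1 : a ⬝ᵥ b ≤ |a ⬝ᵥ b| := le_abs_self _
  have h2 : |a ⬝ᵥ b| = Real.sqrt ((a ⬝ᵥ b)^2) := (Real.sqrt_sq_eq_abs _).symm
  calc a ⬝ᵥ b ≤ Real.sqrt ((a ⬝ᵥ b)^2) := by rw [← h2]; exact h1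
    _ ≤ Real.sqrt ((∑ i, a i ^ 2) * ∑ i, b i ^ 2) := Real.sqrt_le_sqrt h
    _ = vnorm a * vnorm b := by
        rw [vnorm, vnorm, ← Real.sqrt_mul (Finset.sum_nonneg fun i _ => sq_nonneg _)]

lemma vnorm_add_le {m : ℕ} (a b : Fin m → ℝ) : vnorm (a + b) ≤ vnorm a + vnorm b := by
  have hd := dot_le_vnorm_mul a b
  have key : ∑ i, (a + b) i ^ 2 ≤ (vnorm a + vnorm b)^2 := by
    have : ∑ i, (a + b) i ^ 2 = (∑ i, a i ^2) + 2 * (a ⬝ᵥ b) + ∑ i, b i ^2 := by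
      simp only [Pi.add_apply, dotProduct]
      rw [Finset.mul_sum, ← Finset.sum_add_distrib, ← Finset.sum_add_distrib]
      exact Finset.sum_congr rfl fun i _ => by ring
    rw [this, ← sq_vnorm a, ← sq_vnorm b]; nlinarith
  calc vnorm (a + b) ≤ Real.sqrt ((vnorm a + vnorm b)^2) := Real.sqrt_le_sqrt key
    _ = vnorm a + vnorm b :=
        Real.sqrt_sq (by have := vnorm_nonneg a; have := vnorm_nonneg b; linarith)

lemma vnorm_smul {m : ℕ} (c : ℝ) (v : Fin m → ℝ) : vnorm (c • v) = |c| * vnorm v := by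
  rw [vnorm, vnorm, ← Real.sqrt_sq_eq_abs, ← Real.sqrt_mul (sq_nonneg _), Finset.mul_sum]
  congr 1
  exact Finset.sum_congr rfl fun i _ => by simp [mul_pow]

lemma vnorm_sub_le {m : ℕ} (a b : Fin m → ℝ) : vnorm (a - b) ≤ vnorm a + vnorm b := by
  rw [sub_eq_add_neg]
  calc vnorm (a + -b) ≤ vnorm a + vnorm (-b) := vnorm_add_le _ _
    _ = vnorm a + vnorm b := by rw [vnorm_neg]

/-- inequality (L2-risk) of Proposition 3.1:
`‖h‖ ≤ (‖Xh‖/√n)·[c₂c₃/λ + Δ*⁻¹(1 + c₁c₂c₃/λ)]`. -/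
theorem stmt_7 {n p : ℕ} (hn : 0 < n)
    (X : Matrix (Fin n) (Fin p) ℝ) (ε : Fin n → ℝ) (y : Fin n → ℝ)
    (lam Δ c₁ c₂ c₃ : ℝ) (hlam : 0 < lam) (hΔ : 0 < Δ)
    (hc₁ : 0 < c₁) (hc₂ : 0 < c₂) (hc₃ : 0 < c₃)
    (s : Fin p → ℝ) (hs : ∀ j, s j = -1 ∨ s j = 0 ∨ s j = 1)
    (S : Finset (Fin p)) (hS : S = Finset.univ.filter (fun j => s j ≠ 0))
    (k : ℕ) (hk : k = S.card) (hk1 : 1 ≤ k)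
    (K : Set (Fin p → ℝ))
    (hK : K = {h : Fin p → ℝ | ∑ j ∈ Sᶜ, |h j| ≤ -(s ⬝ᵥ h)})
    (hRE : ∀ v ∈ K, Δ * vnorm v ≤ vnorm (X.mulVec v) / Real.sqrt n)
    (hXs : vnorm (X.mulVec s) ≤ c₁ * Real.sqrt ((n : ℝ) * k))
    (hnk : Real.sqrt n ≤ c₂ * Real.sqrt k)
    (hε : vnorm ε ≤ c₃ * Real.sqrt n)
    (bstar : Fin p → ℝ) (hsign : ∀ j, bstar j ≠ 0 → Real.sign (bstar j) = s j)
    (hy : y = X.mulVec bstar + ε)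
    (bhat : Fin p → ℝ)
    (hbhat : ∀ b : Fin p → ℝ,
      (1/2) * (vnorm (X.mulVec bhat - y))^2 + lam * Real.sqrt n * vnorm1 bhat ≤
      (1/2) * (vnorm (X.mulVec b - y))^2 + lam * Real.sqrt n * vnorm1 b) :
    vnorm (bhat - bstar) ≤
      (vnorm (X.mulVec (bhat - bstar)) / Real.sqrt n) *
        (c₂ * c₃ / lam + Δ⁻¹ * (1 + c₁ * c₂ * c₃ / lam)) := by
  set h : Fin p → ℝ := bhat - bstar with hh
  set sn := Real.sqrt n with hsn
  set sk := Real.sqrt k with hskdef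
  have hnR : (0:ℝ) < n := by exact_mod_cast hn
  have hkR : (0:ℝ) < k := by exact_mod_cast hk1
  have hsnpos : 0 < sn := Real.sqrt_pos.mpr hnR
  have hskpos : 0 < sk := Real.sqrt_pos.mpr hkR
  have hskk : sk * sk = (k:ℝ) := Real.mul_self_sqrt hkR.le
  set T := vnorm (X.mulVec h) with hT
  set E := vnorm ε with hE
  have hT0 : 0 ≤ T := vnorm_nonneg _
  have hE0 : 0 ≤ E := vnorm_nonneg _
  -- membership in S
  have hmemS : ∀ j, j ∈ S ↔ s j ≠ 0 := by intro j; simp [hS]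
  have hmemSc : ∀ j, j ∈ Sᶜ ↔ s j = 0 := by
    intro j; rw [Finset.mem_compl, hmemS]; tauto
  have hbstar0 : ∀ j, s j = 0 → bstar j = 0 := by
    intro j hj
    by_contra hne
    have := hsign j hne
    rw [hj] at this
    exact hne (Real.sign_eq_zero_iff.mp this)
  have hsb : ∀ j, s j * bstar j = |bstar j| := by
    intro j
    by_cases hb : bstar j = 0
    · simp [hb]
    · rw [← hsign j hb]
      rcases lt_trichotomy (bstar j) 0 with h' | h' | h'
      · rw [Real.sign_of_neg h', abs_of_neg h']; ring
      · exact absurd h' hb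
      · rw [Real.sign_of_pos h', abs_of_pos h']; ring
  have hss : s ⬝ᵥ s = (k:ℝ) := by
    have : ∀ j, s j * s j = if s j ≠ 0 then (1:ℝ) else 0 := by
      intro j
      rcases hs j with h' | h' | h' <;> simp [h'] <;> norm_num
    rw [dotProduct]
    rw [Finset.sum_congr rfl fun j _ => this j, Finset.sum_boole, ← hS, ← hk]
  have hvs : vnorm s = sk := by
    rw [vnorm]
    congr 1
    have e : ∑ j, s j ^ 2 = s ⬝ᵥ s := by
      rw [dotProduct]; exact Finset.sum_congr rfl fun j _ => by ring
    rw [e, hss]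
  -- ℓ1 inequality
  have hvb1 : vnorm1 bstar = s ⬝ᵥ bstar := by
    rw [vnorm1, dotProduct]
    exact Finset.sum_congr rfl fun j _ => (hsb j).symm
  have hscdot : ∀ w : Fin p → ℝ, s ⬝ᵥ w = ∑ j ∈ S, s j * w j := by
    intro w
    rw [dotProduct]
    exact (Finset.sum_subset (Finset.subset_univ S)
      (fun j _ hj => by rw [(hmemSc j).mp (Finset.mem_compl.mpr hj)]; ring)).symm
  have hl1 : s ⬝ᵥ h + ∑ j ∈ Sᶜ, |h j| ≤ vnorm1 bhat - vnorm1 bstar := by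
    have hsplit : vnorm1 bhat = (∑ j ∈ S, |bhat j|) + ∑ j ∈ Sᶜ, |bhat j| :=
      (Finset.sum_add_sum_compl S _).symm
    have hcomp : ∑ j ∈ Sᶜ, |h j| = ∑ j ∈ Sᶜ, |bhat j| := by
      refine Finset.sum_congr rfl fun j hj => ?_
      have hb0 : bstar j = 0 := hbstar0 j ((hmemSc j).mp hj)
      simp [hh, hb0]
    have hdot : s ⬝ᵥ h = (∑ j ∈ S, s j * bhat j) - s ⬝ᵥ bstar := by
      rw [hscdot h, hscdot bstar]
      rw [← Finset.sum_sub_distrib]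
      exact Finset.sum_congr rfl fun j _ => by simp [hh]; ring
    have hbd : ∑ j ∈ S, s j * bhat j ≤ ∑ j ∈ S, |bhat j| := by
      refine Finset.sum_le_sum fun j _ => ?_
      calc s j * bhat j ≤ |s j * bhat j| := le_abs_self _
        _ = |s j| * |bhat j| := abs_mul _ _
        _ ≤ 1 * |bhat j| := by
            apply mul_le_mul_of_nonneg_right _ (abs_nonneg _)
            rcases hs j with h' | h' | h' <;> simp [h']
        _ = |bhat j| := one_mul _
    rw [hdot, hvb1, hsplit, hcomp]
    linarith
  -- optimality
  have hopt := hbhat bstar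
  rw [hy] at hopt
  have e1 : X.mulVec bhat - (X.mulVec bstar + ε) = X.mulVec h - ε := by
    rw [hh, Matrix.mulVec_sub]; abel
  have e2 : X.mulVec bstar - (X.mulVec bstar + ε) = -ε := by abel
  rw [e1, e2, vnorm_neg] at hopt
  have expand : (vnorm (X.mulVec h - ε))^2 = T^2 - 2 * (X.mulVec h ⬝ᵥ ε) + E^2 := by
    rw [sq_vnorm, hT, hE, sq_vnorm, sq_vnorm, dotProduct, Finset.mul_sum]
    rw [← Finset.sum_sub_distrib, ← Finset.sum_add_distrib]
    exact Finset.sum_congr rfl fun i _ => by simp only [Pi.sub_apply]; ring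
  rw [expand] at hopt
  -- key inequality
  have hkey : lam * sn * (s ⬝ᵥ h + ∑ j ∈ Sᶜ, |h j|) ≤ T * E := by
    have hB := mul_le_mul_of_nonneg_left hl1
      (le_of_lt (mul_pos hlam hsnpos))
    rw [mul_sub] at hB
    have hcs := dot_le_vnorm_mul (X.mulVec h) ε
    rw [← hT, ← hE] at hcs
    nlinarith [sq_nonneg T]
  -- define a and v
  set a : ℝ := T * E / (lam * sn * k) with ha
  have ha0 : 0 ≤ a := div_nonneg (mul_nonneg hT0 hE0) (by positivity)
  set v : Fin p → ℝ := h - a • s with hv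
  have hvK : v ∈ K := by
    rw [hK]
    simp only [Set.mem_setOf_eq]
    have hsv : s ⬝ᵥ v = s ⬝ᵥ h - a * (k:ℝ) := by
      rw [hv, dotProduct_sub, dotProduct_smul, hss, smul_eq_mul]
    have hsum : ∑ j ∈ Sᶜ, |v j| = ∑ j ∈ Sᶜ, |h j| := by
      refine Finset.sum_congr rfl fun j hj => ?_
      have : s j = 0 := (hmemSc j).mp hj
      simp [hv, this]
    rw [hsum, hsv]
    have hak : a * (k:ℝ) = T * E / (lam * sn) := by
      rw [ha]; field_simp
    have hdiv : s ⬝ᵥ h + ∑ j ∈ Sᶜ, |h j| ≤ T * E / (lam * sn) := by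
      rw [le_div_iff₀ (mul_pos hlam hsnpos)]
      linarith [hkey]
    linarith [hdiv, hak.symm ▸ hdiv]
  -- norm decomposition
  have hhd : h = a • s + v := by
    rw [hv]
    funext i
    simp only [Pi.add_apply, Pi.sub_apply, Pi.smul_apply, smul_eq_mul]
    ring
  have hn1 : vnorm h ≤ a * sk + vnorm v := by
    calc vnorm h = vnorm (a • s + v) := by rw [← hhd]
      _ ≤ vnorm (a • s) + vnorm v := vnorm_add_le _ _
      _ = a * sk + vnorm v := by rw [vnorm_smul, abs_of_nonneg ha0, hvs]
  have hXv : X.mulVec v = X.mulVec h - a • X.mulVec s := by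
    rw [hv, Matrix.mulVec_sub, Matrix.mulVec_smul]
  have hsqrtnk : Real.sqrt ((n:ℝ) * k) = sn * sk := Real.sqrt_mul hnR.le _
  have hnv : vnorm (X.mulVec v) ≤ T + a * (c₁ * (sn * sk)) := by
    rw [hXv]
    calc vnorm (X.mulVec h - a • X.mulVec s)
        ≤ vnorm (X.mulVec h) + vnorm (a • X.mulVec s) := vnorm_sub_le _ _
      _ = T + a * vnorm (X.mulVec s) := by rw [vnorm_smul, abs_of_nonneg ha0, hT]
      _ ≤ T + a * (c₁ * (sn * sk)) := by
          have := mul_le_mul_of_nonneg_left (hsqrtnk ▸ hXs) ha0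
          linarith
  -- bound on E
  have hE2 : E ≤ c₃ * (c₂ * sk) := by
    calc E ≤ c₃ * sn := hε
      _ ≤ c₃ * (c₂ * sk) := mul_le_mul_of_nonneg_left hnk hc₃.le
  -- Bound 1 : a * sk ≤ (T/sn) * (c₂*c₃/lam)
  have hbound1 : a * sk ≤ (T / sn) * (c₂ * c₃ / lam) := by
    have lhs_eq : a * sk = (T * E * sk) / (lam * sn * k) := by rw [ha]; ring
    have rhs_eq : (T / sn) * (c₂ * c₃ / lam) = (T * c₂ * c₃) / (sn * lam) := by ring
    rw [lhs_eq, rhs_eq, div_le_div_iff₀ (mul_pos (mul_pos hlam hsnpos) hkR) (mul_pos hsnpos hlam), ← hskk]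
    have key := mul_le_mul_of_nonneg_right hE2
      (show 0 ≤ T * sk * sn * lam by positivity)
    ring_nf at key ⊢
    linarith [key]
  -- Bound aux : a * (c₁ * (sn * sk)) ≤ T * (c₁*c₂*c₃)/lam
  have hbaux : a * (c₁ * (sn * sk)) ≤ T * (c₁ * c₂ * c₃) / lam := by
    have lhs_eq : a * (c₁ * (sn * sk)) = (T * E * c₁ * sn * sk) / (lam * sn * k) := by
      rw [ha]; ring
    rw [lhs_eq, div_le_div_iff₀ (mul_pos (mul_pos hlam hsnpos) hkR) hlam, ← hskk]
    have key := mul_le_mul_of_nonneg_right hE2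
      (show 0 ≤ T * c₁ * sn * sk * lam by positivity)
    ring_nf at key ⊢
    linarith [key]
  -- Bound 2 on v
  have hvv : vnorm v ≤ Δ⁻¹ * ((T / sn) * (1 + c₁ * c₂ * c₃ / lam)) := by
    have hrev := hRE v hvK
    have h1 : vnorm v ≤ Δ⁻¹ * (vnorm (X.mulVec v) / sn) := by
      have h2 : vnorm v = Δ⁻¹ * (Δ * vnorm v) := by field_simp
      rw [h2]
      exact mul_le_mul_of_nonneg_left hrev (inv_nonneg.mpr hΔ.le)
    have h3 : vnorm (X.mulVec v) / sn ≤ (T / sn) * (1 + c₁ * c₂ * c₃ / lam) := by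
      have rhs_eq : (T / sn) * (1 + c₁ * c₂ * c₃ / lam)
          = (T + T * (c₁ * c₂ * c₃) / lam) / sn := by ring
      rw [rhs_eq]
      exact (div_le_div_iff_of_pos_right hsnpos).mpr (by linarith [hnv, hbaux])
    calc vnorm v ≤ Δ⁻¹ * (vnorm (X.mulVec v) / sn) := h1
      _ ≤ Δ⁻¹ * ((T / sn) * (1 + c₁ * c₂ * c₃ / lam)) :=
        mul_le_mul_of_nonneg_left h3 (inv_nonneg.mpr hΔ.le)
  calc vnorm h ≤ a * sk + vnorm v := hn1
    _ ≤ (T / sn) * (c₂ * c₃ / lam) + Δ⁻¹ * ((T / sn) * (1 + c₁ * c₂ * c₃ / lam)) :=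
        add_le_add hbound1 hvv
    _ = (T / sn) * (c₂ * c₃ / lam + Δ⁻¹ * (1 + c₁ * c₂ * c₃ / lam)) := by ring
end
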